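/- Let X and Y be topological spaces, (Z, λ) an equiconnected space, and f : X × Y → Z a mapping such that x ↦ f(x,y) is continuous for every y ∈ Y. Suppose there exist a sequence ((φ_{i,n})_{i∈I_n})_{n∈ℕ} of locally finite partitions of unity on X and families (x_{i,n})_{i∈I_n} of points of X such that: (a) y ↦ f(x_{i,n}, y) is continuous for every n and i ∈ I_n; (b) for every x ∈ X and every neighborhood U of x there exists n_0 such that for all n ≥ n_0 and i ∈ I_n, x ∈ supp φ_{i,n} implies x_{i,n} ∈ U; (c) the sequence of families (supp φ_{i,n} : i ∈ I_n)_{n∈ℕ} is uniformly pointwise finite in X. Then f is the pointwise limit of a sequence of continuous maps X × Y → Z. -/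

import Mathlib

open Set Function Filter Topology

universe u

/-- An *equiconnecting* map on `Z`: a map `λ : Z × Z × [0,1] → Z`, continuous on
`Z × Z × [0,1]`, with `λ(x,y,0) = x`, `λ(x,y,1) = y` and `λ(x,x,t) = x`. -/
structure IsEquiconnecting {Z : Type*} [TopologicalSpace Z] (lam : Z → Z → ℝ → Z) : Prop where
  continuousOn : ContinuousOn (fun p : Z × Z × ℝ => lam p.1 p.2.1 p.2.2)
    (Set.univ ×ˢ Set.univ ×ˢ Set.Icc (0 : ℝ) 1)
  map_zero : ∀ x y : Z, lam x y 0 = x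
  map_one : ∀ x y : Z, lam x y 1 = y
  map_diag : ∀ x : Z, ∀ t ∈ Set.Icc (0 : ℝ) 1, lam x x t = x

/-- `lambdaIter lam n` is the map `λ_{n+1} : Z^{n+1} × S_{n+1} → Z` from the paper,
defined recursively. -/
noncomputable def lambdaIter {Z : Type*} (lam : Z → Z → ℝ → Z) :
    (n : ℕ) → (Fin (n + 1) → Z) → (Fin (n + 1) → ℝ) → Z
  | 0, x, _ => x 0
  | n + 1, x, a =>
      if 0 < a 0 + a 1 then
        lambdaIter lam n
          (Fin.cons (lam (x 0) (x 1) (a 1 / (a 0 + a 1))) fun i => x i.succ.succ)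
          (Fin.cons (a 0 + a 1) fun i => a i.succ.succ)
      else
        lambdaIter lam n (fun i => x i.succ) fun i => a i.succ

/-- `lambdaIterSet lam A n` is the set `λ^n(A)`:  `λ^0(A) = A` and
`λ^{n+1}(A) = λ(λ^n(A) × A × [0,1])`. -/
def lambdaIterSet {Z : Type*} (lam : Z → Z → ℝ → Z) (A : Set Z) : ℕ → Set Z
  | 0 => A
  | n + 1 => (fun p : Z × Z × ℝ => lam p.1 p.2.1 p.2.2) ''
      (lambdaIterSet lam A n ×ˢ A ×ˢ Set.Icc (0 : ℝ) 1)

/-- `λ^∞(A) = ⋃_{n ≥ 1} λ^n(A)`. -/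
def lambdaInftySet {Z : Type*} (lam : Z → Z → ℝ → Z) (A : Set Z) : Set Z :=
  ⋃ n : ℕ, lambdaIterSet lam A (n + 1)

/-- An equiconnected space `(Z, λ)` is locally convex if every point has arbitrarily small
neighborhoods `V` with `λ^∞(V)` inside a given neighborhood. -/
def IsLocallyConvexEquiconnected {Z : Type*} [TopologicalSpace Z] (lam : Z → Z → ℝ → Z) :
    Prop :=
  ∀ z : Z, ∀ U ∈ nhds z, ∃ V ∈ nhds z, lambdaInftySet lam V ⊆ U

/-- A map is Baire-one if it is the pointwise limit of a sequence of continuous maps. -/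
def BaireOne {Y Z : Type*} [TopologicalSpace Y] [TopologicalSpace Z] (g : Y → Z) : Prop :=
  ∃ h : ℕ → Y → Z, (∀ n, Continuous (h n)) ∧
    ∀ y, Filter.Tendsto (fun n => h n y) Filter.atTop (nhds (g y))

/-- A locally finite partition of unity on `X`: continuous `[0,1]`-valued functions whose
supports (closures of the sets where they are nonzero) form a locally finite family and whose
pointwise sum is `1`. -/
def IsLocFinPartitionOfUnity {I X : Type*} [TopologicalSpace X] (φ : I → X → ℝ) : Prop :=
  (∀ i, Continuous (φ i)) ∧ (∀ i x, φ i x ∈ Set.Icc (0 : ℝ) 1) ∧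
    (LocallyFinite fun i => closure (Function.support (φ i))) ∧ ∀ x, ∑ᶠ i, φ i x = 1

/-- A strong PP-space: for every dense `D ⊆ X` there are a sequence of locally finite
partitions of unity and families of points of `D` such that points attached to the supports
containing `x` converge to `x` uniformly in the index, in the sense of condition (3). -/
def IsStrongPPSpace (X : Type*) [TopologicalSpace X] : Prop :=
  ∀ D : Set X, Dense D →
    ∃ (I : ℕ → Type u) (φ : ∀ n, I n → X → ℝ) (p : ∀ n, I n → X),
      (∀ n, IsLocFinPartitionOfUnity (φ n)) ∧ (∀ n i, p n i ∈ D) ∧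
      ∀ x : X, ∀ U ∈ nhds x, ∃ n₀ : ℕ, ∀ n ≥ n₀, ∀ i : I n,
        x ∈ closure (Function.support (φ n i)) → p n i ∈ U

/-- A zero set: the preimage of `{0}` under a continuous function `X → [0,1]`. -/
def IsZeroSet {X : Type*} [TopologicalSpace X] (A : Set X) : Prop :=
  ∃ f : X → ℝ, Continuous f ∧ (∀ x, f x ∈ Set.Icc (0 : ℝ) 1) ∧ A = f ⁻¹' {0}

/-- A cozero set: the preimage of `(0,1]` under a continuous function `X → [0,1]`. -/
def IsCozeroSet {X : Type*} [TopologicalSpace X] (A : Set X) : Prop :=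
  ∃ f : X → ℝ, Continuous f ∧ (∀ x, f x ∈ Set.Icc (0 : ℝ) 1) ∧ A = f ⁻¹' Set.Ioc (0 : ℝ) 1

/-- A functionally ambiguous set: simultaneously a countable union of zero sets and a
countable intersection of cozero sets. -/
def IsFunctionallyAmbiguous {X : Type*} [TopologicalSpace X] (A : Set X) : Prop :=
  (∃ F : ℕ → Set X, (∀ n, IsZeroSet (F n)) ∧ A = ⋃ n, F n) ∧
    ∃ B : ℕ → Set X, (∀ n, IsCozeroSet (B n)) ∧ A = ⋂ n, B n

/-- A discrete family of sets: every point has a neighborhood meeting at most one member. -/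
def IsDiscreteFamily {I X : Type*} [TopologicalSpace X] (A : I → Set X) : Prop :=
  ∀ x : X, ∃ U ∈ nhds x, {i : I | (U ∩ A i).Nonempty}.Subsingleton

/-- Weakly collectionwise normal: every discrete family of zero sets can be separated by a
discrete family of cozero sets. -/
def WeaklyCollectionwiseNormal (X : Type*) [TopologicalSpace X] : Prop :=
  ∀ (S : Type u) (F : S → Set X), (∀ s, IsZeroSet (F s)) → IsDiscreteFamily F →
    ∃ U : S → Set X, (∀ s, IsCozeroSet (U s)) ∧ IsDiscreteFamily U ∧ ∀ s, F s ⊆ U s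

/-- A contracting structure on `Z`: a continuous `γ : Z × [0,1] → Z` with `γ(z,0) = z` and
`γ(z,1) = z₀`. -/
structure IsContracting {Z : Type*} [TopologicalSpace Z] (γ : Z → ℝ → Z) (z₀ : Z) :
    Prop where
  continuousOn : ContinuousOn (fun p : Z × ℝ => γ p.1 p.2) (Set.univ ×ˢ Set.Icc (0 : ℝ) 1)
  map_zero : ∀ z : Z, γ z 0 = z
  map_one : ∀ z : Z, γ z 1 = z₀

section CombAux

variable {Z : Type*} [TopologicalSpace Z]

set_option linter.unusedSectionVars false

/-- Iterated equiconnected combination along a list of point–weight pairs, starting from a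
current point `c` with accumulated weight `s`. -/
noncomputable def comb (μ : Z × Z × unitInterval → Z) : Z → ℝ → List (Z × ℝ) → Z
  | c, _, [] => c
  | c, s, q :: l =>
      comb μ (μ (c, q.1, Set.projIcc 0 1 zero_le_one (q.2 / (s + q.2)))) (s + q.2) l

theorem comb_filter (μ : Z × Z × unitInterval → Z) (h0 : ∀ c z, μ (c, z, 0) = c) :
    ∀ (l : List (Z × ℝ)) (c : Z) (s : ℝ),
      comb μ c s (l.filter fun q => decide (q.2 ≠ 0)) = comb μ c s l := by
  intro l
  induction l with
  | nil => intro c s; rfl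
  | cons q l ih =>
    intro c s
    by_cases h : q.2 = 0
    · rw [List.filter_cons_of_neg (by simp [h])]
      have : comb μ c s (q :: l) = comb μ c s l := by
        show comb μ (μ (c, q.1, Set.projIcc 0 1 zero_le_one (q.2 / (s + q.2)))) (s + q.2) l
            = comb μ c s l
        rw [h, add_zero, zero_div]
        have hp : Set.projIcc (0:ℝ) 1 zero_le_one 0 = 0 := by
          rw [Set.projIcc_left]; rfl
        rw [hp, h0]
      rw [this, ih]
    · rw [List.filter_cons_of_pos (by simp [h])]
      show comb μ _ _ (l.filter fun q => decide (q.2 ≠ 0)) = _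
      rw [ih]; rfl

theorem comb_cons_pos (μ : Z × Z × unitInterval → Z) (h1 : ∀ c z, μ (c, z, 1) = z)
    (c z : Z) (a : ℝ) (ha : a ≠ 0) (l : List (Z × ℝ)) :
    comb μ c 0 ((z, a) :: l) = comb μ z a l := by
  show comb μ (μ (c, z, Set.projIcc 0 1 zero_le_one (a / (0 + a)))) (0 + a) l = comb μ z a l
  rw [zero_add, div_self ha]
  have hp : Set.projIcc (0:ℝ) 1 zero_le_one 1 = 1 := by rw [Set.projIcc_right]; rfl
  rw [hp, h1]

theorem comb_mem (μ : Z × Z × unitInterval → Z) (V : ℕ → Set Z)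
    (hmono : ∀ j, V (j + 1) ⊆ V j)
    (hstep : ∀ j, ∀ a ∈ V (j + 1), ∀ b ∈ V (j + 1), ∀ t, μ (a, b, t) ∈ V j) :
    ∀ (l : List (Z × ℝ)) (c : Z) (s : ℝ) (m : ℕ), c ∈ V m → (∀ q ∈ l, q.1 ∈ V m) →
      l.length ≤ m → comb μ c s l ∈ V (m - l.length) := by
  intro l
  induction l with
  | nil => intro c s m hc _ _; simpa [comb] using hc
  | cons q l ih =>
    intro c s m hc hl hlen
    obtain ⟨m', rfl⟩ : ∃ m', m = m' + 1 := by
      cases m with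
      | zero => simp at hlen
      | succ m' => exact ⟨m', rfl⟩
    have hc' : μ (c, q.1, Set.projIcc 0 1 zero_le_one (q.2 / (s + q.2))) ∈ V m' :=
      hstep m' c hc q.1 (hl q List.mem_cons_self) _
    have := ih _ (s + q.2) m' hc'
      (fun r hr => hmono m' (hl r (List.mem_cons_of_mem _ hr)))
      (by simpa [Nat.succ_le_succ_iff] using hlen)
    simpa [Nat.succ_sub_succ, comb] using this

theorem comb_shrink (μ : Z × Z × unitInterval → Z) (hμ : Continuous μ)
    (hdiag : ∀ z t, μ (z, z, t) = z) (z : Z) (U : Set Z) (hU : IsOpen U) (hz : z ∈ U) :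
    ∃ V : Set Z, IsOpen V ∧ z ∈ V ∧ V ⊆ U ∧
      ∀ a ∈ V, ∀ b ∈ V, ∀ t, μ (a, b, t) ∈ U := by
  set μ₂ : (Z × Z) × unitInterval → Z := fun q => μ (q.1.1, q.1.2, q.2) with hμ₂
  have hμ₂c : Continuous μ₂ := by
    apply hμ.comp
    exact (continuous_fst.fst).prodMk ((continuous_fst.snd).prodMk continuous_snd)
  have hsub : ({(z, z)} : Set (Z × Z)) ×ˢ (univ : Set unitInterval) ⊆ μ₂ ⁻¹' U := by
    rintro ⟨⟨a, b⟩, t⟩ ⟨hq, -⟩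
    simp only [mem_singleton_iff, Prod.mk.injEq] at hq
    obtain ⟨rfl, rfl⟩ := hq
    simpa [hμ₂, hdiag] using hz
  obtain ⟨u, v, hu, hv, hzu, hvv, huv⟩ :=
    generalized_tube_lemma isCompact_singleton isCompact_univ (hU.preimage hμ₂c) hsub
  obtain ⟨u₁, u₂, hu₁, hu₂, hz₁, hz₂, h₁₂⟩ :=
    isOpen_prod_iff.1 hu z z (hzu rfl)
  refine ⟨u₁ ∩ u₂ ∩ U, (hu₁.inter hu₂).inter hU, ⟨⟨hz₁, hz₂⟩, hz⟩, inter_subset_right, ?_⟩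
  rintro a ⟨⟨ha₁, ha₂⟩, -⟩ b ⟨⟨hb₁, hb₂⟩, -⟩ t
  exact huv (Set.mk_mem_prod (h₁₂ (Set.mk_mem_prod ha₁ hb₂)) (hvv (mem_univ t)))

theorem comb_chain (μ : Z × Z × unitInterval → Z) (hμ : Continuous μ)
    (hdiag : ∀ z t, μ (z, z, t) = z) (z : Z) (W : Set Z) (hW : W ∈ 𝓝 z) :
    ∃ V : ℕ → Set Z, (∀ j, IsOpen (V j)) ∧ (∀ j, z ∈ V j) ∧ (∀ j, V (j + 1) ⊆ V j) ∧
      (∀ j, ∀ a ∈ V (j + 1), ∀ b ∈ V (j + 1), ∀ t, μ (a, b, t) ∈ V j) ∧ V 0 ⊆ W := by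
  classical
  let P : Set Z → Prop := fun S => IsOpen S ∧ z ∈ S
  let G : {S : Set Z // P S} → {S : Set Z // P S} := fun S =>
    ⟨Classical.choose (comb_shrink μ hμ hdiag z S.1 S.2.1 S.2.2),
      (Classical.choose_spec (comb_shrink μ hμ hdiag z S.1 S.2.1 S.2.2)).1,
      (Classical.choose_spec (comb_shrink μ hμ hdiag z S.1 S.2.1 S.2.2)).2.1⟩
  have hG : ∀ S : {S : Set Z // P S}, (G S).1 ⊆ S.1 ∧
      ∀ a ∈ (G S).1, ∀ b ∈ (G S).1, ∀ t, μ (a, b, t) ∈ S.1 := fun S =>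
    ⟨(Classical.choose_spec (comb_shrink μ hμ hdiag z S.1 S.2.1 S.2.2)).2.2.1,
      (Classical.choose_spec (comb_shrink μ hμ hdiag z S.1 S.2.1 S.2.2)).2.2.2⟩
  let S₀ : {S : Set Z // P S} := ⟨interior W, isOpen_interior, mem_interior_iff_mem_nhds.2 hW⟩
  refine ⟨fun j => (G^[j] S₀).1, fun j => (G^[j] S₀).2.1, fun j => (G^[j] S₀).2.2, ?_, ?_, ?_⟩
  · intro j
    show (G^[j+1] S₀).1 ⊆ (G^[j] S₀).1
    rw [Function.iterate_succ_apply']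
    exact (hG _).1
  · intro j
    show ∀ a ∈ (G^[j+1] S₀).1, ∀ b ∈ (G^[j+1] S₀).1, ∀ t, μ (a, b, t) ∈ (G^[j] S₀).1
    rw [Function.iterate_succ_apply']
    exact (hG _).2
  · exact interior_subset

theorem contAt_comb {W : Type*} [TopologicalSpace W]
    (μ : Z × Z × unitInterval → Z) (hμ : Continuous μ) (h1 : ∀ c z, μ (c, z, 1) = z)
    (w₀ : W) :
    ∀ (L : List ((W → Z) × (W → ℝ))),
      (∀ r ∈ L, Continuous r.1 ∧ Continuous r.2 ∧ ∀ w, 0 ≤ r.2 w) →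
      ∀ (c : W → Z) (s : W → ℝ) (C : Set Z), Continuous s → (∀ w, 0 ≤ s w) →
      IsCompact C → (∀ V, IsOpen V → C ⊆ V → ∀ᶠ w in 𝓝 w₀, c w ∈ V) →
      (0 < s w₀ → ContinuousAt c w₀) →
      0 < s w₀ + (L.map fun r => r.2 w₀).sum →
      ContinuousAt (fun w => comb μ (c w) (s w) (L.map fun r => (r.1 w, r.2 w))) w₀ := by
  have hμ₂c : Continuous (fun q : (Z × Z) × unitInterval => μ (q.1.1, q.1.2, q.2)) := by
    apply hμ.comp
    exact (continuous_fst.fst).prodMk ((continuous_fst.snd).prodMk continuous_snd)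
  intro L
  induction L with
  | nil =>
    intro _ c s C hs hs0 hC htame hcc hpos
    simp only [List.map_nil, List.sum_nil, add_zero] at hpos ⊢
    exact hcc hpos
  | cons r L ih =>
    intro hL c s C hs hs0 hC htame hcc hpos
    obtain ⟨hz, ha, ha0⟩ := hL r List.mem_cons_self
    have hL' := fun q hq => hL q (List.mem_cons_of_mem _ hq)
    set z : W → Z := r.1
    set a : W → ℝ := r.2
    set t : W → unitInterval := fun w => Set.projIcc 0 1 zero_le_one (a w / (s w + a w))
      with ht
    set c' : W → Z := fun w => μ (c w, z w, t w) with hc'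
    set s' : W → ℝ := fun w => s w + a w with hs'
    set C' : Set Z := (fun q : (Z × Z) × unitInterval => μ (q.1.1, q.1.2, q.2)) ''
      ((C ×ˢ {z w₀}) ×ˢ (univ : Set unitInterval)) with hC'
    have hC'c : IsCompact C' :=
      (((hC.prod isCompact_singleton)).prod isCompact_univ).image hμ₂c
    have htame' : ∀ V, IsOpen V → C' ⊆ V → ∀ᶠ w in 𝓝 w₀, c' w ∈ V := by
      intro V hV hCV
      have hsub : (C ×ˢ {z w₀}) ×ˢ (univ : Set unitInterval) ⊆
          (fun q : (Z × Z) × unitInterval => μ (q.1.1, q.1.2, q.2)) ⁻¹' V :=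
        fun q hq => hCV (mem_image_of_mem _ hq)
      obtain ⟨u, v, hu, hv, hCu, hvv, huv⟩ :=
        generalized_tube_lemma (hC.prod isCompact_singleton) isCompact_univ
          (hV.preimage hμ₂c) hsub
      obtain ⟨u₁, u₂, hu₁, hu₂, hCu₁, hzu₂, h₁₂⟩ :=
        generalized_tube_lemma hC isCompact_singleton hu hCu
      have h1' : ∀ᶠ w in 𝓝 w₀, c w ∈ u₁ := htame u₁ hu₁ hCu₁
      have h2' : ∀ᶠ w in 𝓝 w₀, z w ∈ u₂ :=
        hz.continuousAt (x := w₀) (hu₂.mem_nhds (hzu₂ rfl))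
      filter_upwards [h1', h2'] with w hw1 hw2
      exact huv (Set.mk_mem_prod (h₁₂ (Set.mk_mem_prod hw1 hw2)) (hvv (mem_univ _)))
    have hcc' : 0 < s' w₀ → ContinuousAt c' w₀ := by
      intro hspos
      rcases (hs0 w₀).lt_or_eq with hpos0 | hzero
      · have hden : s w₀ + a w₀ ≠ 0 := by positivity
        have htc : ContinuousAt t w₀ := by
          apply continuous_projIcc.continuousAt.comp
          exact (ha.continuousAt.div ((hs.add ha).continuousAt) hden)
        exact hμ₂c.continuousAt.comp
          (((hcc hpos0).prodMk hz.continuousAt).prodMk htc)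
      · have hspos' : 0 < s w₀ + a w₀ := hspos
        have haw : a w₀ ≠ 0 := by
          intro h
          rw [← hzero, h] at hspos'
          simp at hspos'
        have htval : t w₀ = 1 := by
          rw [ht]
          simp only [← hzero, zero_add, div_self haw]
          rw [Set.projIcc_right]; rfl
        have hcval : c' w₀ = z w₀ := by
          show μ (c w₀, z w₀, t w₀) = z w₀
          rw [htval, h1]
        rw [ContinuousAt, hcval]
        rw [tendsto_nhds]
        intro V hV hzV
        have hsub : (C ×ˢ {z w₀}) ×ˢ ({1} : Set unitInterval) ⊆
            (fun q : (Z × Z) × unitInterval => μ (q.1.1, q.1.2, q.2)) ⁻¹' V := by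
          rintro ⟨⟨cc, b⟩, tt⟩ ⟨⟨-, hb⟩, htt⟩
          simp only [mem_singleton_iff] at hb htt
          subst hb; subst htt
          simpa [h1] using hzV
        obtain ⟨u, v, hu, hv, hCu, h1v, huv⟩ :=
          generalized_tube_lemma (hC.prod isCompact_singleton) isCompact_singleton
            (hV.preimage hμ₂c) hsub
        obtain ⟨u₁, u₂, hu₁, hu₂, hCu₁, hzu₂, h₁₂⟩ :=
          generalized_tube_lemma hC isCompact_singleton hu hCu
        have htc : ContinuousAt t w₀ := by
          apply continuous_projIcc.continuousAt.comp
          refine ha.continuousAt.div ((hs.add ha).continuousAt) ?_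
          rw [← hzero, zero_add]; exact haw
        have h1' : ∀ᶠ w in 𝓝 w₀, c w ∈ u₁ := htame u₁ hu₁ hCu₁
        have h2' : ∀ᶠ w in 𝓝 w₀, z w ∈ u₂ :=
          hz.continuousAt (x := w₀) (hu₂.mem_nhds (hzu₂ rfl))
        have h3' : ∀ᶠ w in 𝓝 w₀, t w ∈ v := by
          have : v ∈ 𝓝 (t w₀) := by
            rw [htval]; exact hv.mem_nhds (h1v rfl)
          exact htc this
        filter_upwards [h1', h2', h3'] with w hw1 hw2 hw3
        exact huv (Set.mk_mem_prod (h₁₂ (Set.mk_mem_prod hw1 hw2)) hw3)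
    have hmain := ih hL' c' s' C' (hs.add ha)
      (fun w => add_nonneg (hs0 w) (ha0 w)) hC'c htame' hcc'
      (by
        simp only [List.map_cons, List.sum_cons] at hpos
        have h' : s' w₀ = s w₀ + a w₀ := rfl
        rw [h']
        linarith)
    exact hmain

end CombAux

/-- Let `(Z, λ)` be an equiconnected space and `f : X × Y → Z` continuous in
the first variable.  Suppose there are a sequence of locally finite partitions of unity
`(φ_{i,n})_{i ∈ I_n}` on `X` and families of points `p_{i,n} ∈ X` such that (a) the sections
`y ↦ f(p_{i,n}, y)` are continuous, (b) condition (3) of the paper holds, and (c) the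
sequence of families of supports is uniformly pointwise finite.  Then `f` is a pointwise
limit of a sequence of continuous maps. -/
theorem baireOne_of_uniformly_pointwise_finite {X Y Z : Type*} [TopologicalSpace X]
    [TopologicalSpace Y] [TopologicalSpace Z]
    (lam : Z → Z → ℝ → Z) (hlam : IsEquiconnecting lam)
    (f : X × Y → Z) (hsep : ∀ y : Y, Continuous fun x => f (x, y))
    (I : ℕ → Type u) (φ : ∀ n, I n → X → ℝ) (p : ∀ n, I n → X)
    (hpart : ∀ n, IsLocFinPartitionOfUnity (φ n))
    (hsect : ∀ (n) (i : I n), Continuous fun y => f (p n i, y))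
    (happrox : ∀ x : X, ∀ U ∈ nhds x, ∃ n₀ : ℕ, ∀ n ≥ n₀, ∀ i : I n,
      x ∈ closure (Function.support (φ n i)) → p n i ∈ U)
    (hupf : ∀ x : X, ∃ K : ℕ, ∀ n : ℕ, ∃ s : Finset (I n), s.card ≤ K ∧
      ∀ i : I n, x ∈ closure (Function.support (φ n i)) → i ∈ s) :
    ∃ g : ℕ → X × Y → Z, (∀ n, Continuous (g n)) ∧
      ∀ q : X × Y, Filter.Tendsto (fun n => g n q) Filter.atTop (nhds (f q)) := by
  classical
  by_cases hne : Nonempty (X × Y)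
  swap
  · haveI : IsEmpty (X × Y) := not_nonempty_iff.mp hne
    refine ⟨fun _ q => f q, fun n => ?_, fun q => (IsEmpty.false q).elim⟩
    rw [continuous_iff_continuousAt]
    intro q; exact (IsEmpty.false q).elim
  obtain ⟨q₀⟩ := hne
  letI lo : ∀ n, LinearOrder (I n) := fun n => IsWellOrder.linearOrder WellOrderingRel
  -- the equiconnecting map restricted to the unit interval
  set μ : Z × Z × unitInterval → Z := fun pr => lam pr.1 pr.2.1 (pr.2.2 : ℝ) with hμdef
  have hμc : Continuous μ := by
    have he : Continuous (fun pr : Z × Z × unitInterval => (pr.1, pr.2.1, (pr.2.2 : ℝ))) :=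
      continuous_fst.prodMk (continuous_snd.fst.prodMk
        (continuous_subtype_val.comp continuous_snd.snd))
    exact hlam.continuousOn.comp_continuous he
      (fun pr => ⟨mem_univ _, mem_univ _, pr.2.2.2⟩)
  have hμ0 : ∀ c z : Z, μ (c, z, 0) = c := fun c z => hlam.map_zero c z
  have hμ1 : ∀ c z : Z, μ (c, z, 1) = z := fun c z => hlam.map_one c z
  have hμd : ∀ (z : Z) (t : unitInterval), μ (z, z, t) = z := fun z t =>
    hlam.map_diag z (t : ℝ) t.2
  -- finite sets of indices with nonzero weight
  have hfin : ∀ n (x : X), {i : I n | φ n i x ≠ 0}.Finite := fun n x =>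
    ((hpart n).2.2.1.point_finite x).subset
      (fun i hi => subset_closure (Function.mem_support.2 hi))
  set S : ∀ n, X → Finset (I n) := fun n x => (hfin n x).toFinset with hSdef
  set lst : ∀ n, X → List (I n) := fun n x => (S n x).sort (· ≤ ·) with hlstdef
  have hmem_lst : ∀ n (x : X) (i : I n), i ∈ lst n x ↔ φ n i x ≠ 0 := by
    intro n x i
    rw [hlstdef]
    simp [Finset.mem_sort, hSdef, Set.Finite.mem_toFinset]
  have hexists : ∀ n (x : X), ∃ i, φ n i x ≠ 0 := by
    intro n x
    by_contra h
    push_neg at h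
    have h1 := (hpart n).2.2.2 x
    rw [finsum_eq_zero_of_forall_eq_zero h] at h1
    exact zero_ne_one h1
  set z₀ : Z := f q₀ with hz₀
  set g : ℕ → X × Y → Z := fun n q =>
    comb μ z₀ 0 ((lst n q.1).map fun i => (f (p n i, q.2), φ n i q.1)) with hgdef
  refine ⟨g, ?_, ?_⟩
  · -- continuity
    intro n
    rw [continuous_iff_continuousAt]
    rintro ⟨x₀, y₀⟩
    obtain ⟨U₀, hU₀, hUfin⟩ := (hpart n).2.2.1 x₀
    set T : Finset (I n) := hUfin.toFinset with hT
    set Tl : List (I n) := T.sort (· ≤ ·) with hTl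
    have hsubT : ∀ x ∈ U₀, ∀ i : I n, φ n i x ≠ 0 → i ∈ T := by
      intro x hx i hi
      rw [hT, Set.Finite.mem_toFinset]
      exact ⟨x, subset_closure (Function.mem_support.2 hi), hx⟩
    -- local formula for g n over the fixed index list Tl
    have heq : ∀ q : X × Y, q.1 ∈ U₀ →
        g n q = comb μ z₀ 0 (Tl.map fun i => (f (p n i, q.2), φ n i q.1)) := by
      rintro ⟨x, y⟩ hx
      have hfilter : Tl.filter (fun i => decide (φ n i x ≠ 0)) = lst n x := by
        refine List.Perm.eq_of_pairwise'
          ((Finset.pairwise_sort _ _).filter _) (Finset.pairwise_sort _ _) ?_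
        rw [List.perm_ext_iff_of_nodup ((Finset.sort_nodup _ _).filter _)
          (Finset.sort_nodup _ _)]
        intro i
        simp only [List.mem_filter, Finset.mem_sort, decide_eq_true_eq, hmem_lst, hTl]
        constructor
        · rintro ⟨-, h2⟩; exact (Set.Finite.mem_toFinset _).2 h2
        · intro h; exact ⟨hsubT x hx i ((Set.Finite.mem_toFinset _).1 h), (Set.Finite.mem_toFinset _).1 h⟩
      show comb μ z₀ 0 ((lst n x).map fun i => (f (p n i, y), φ n i x)) = _
      rw [← comb_filter μ hμ0 (Tl.map fun i => (f (p n i, y), φ n i x)) z₀ 0]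
      congr 1
      rw [List.filter_map]
      rw [← hfilter]
      apply congrArg
      apply List.filter_congr
      intro i _
      rfl
    -- continuity of the fixed-list formula
    set L : List ((X × Y → Z) × (X × Y → ℝ)) :=
      Tl.map fun i => ((fun q : X × Y => f (p n i, q.2)), (fun q : X × Y => φ n i q.1))
      with hLdef
    have hL : ∀ r ∈ L, Continuous r.1 ∧ Continuous r.2 ∧ ∀ w, 0 ≤ r.2 w := by
      intro r hr
      rw [hLdef] at hr
      obtain ⟨i, hi, rfl⟩ := List.mem_map.1 hr
      exact ⟨(hsect n i).comp continuous_snd, ((hpart n).1 i).comp continuous_fst,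
        fun q => ((hpart n).2.1 i q.1).1⟩
    have hx₀U : x₀ ∈ U₀ := mem_of_mem_nhds hU₀
    have hpos : (0:ℝ) <
        (fun _ : X × Y => (0:ℝ)) (x₀, y₀) + (L.map fun r => r.2 (x₀, y₀)).sum := by
      obtain ⟨i₀, hi₀⟩ := hexists n x₀
      have hTmem : i₀ ∈ Tl := (Finset.mem_sort _).2 (hsubT x₀ hx₀U i₀ hi₀)
      have hmm : φ n i₀ x₀ ∈ L.map fun r => r.2 (x₀, y₀) := by
        rw [hLdef, List.map_map]
        exact List.mem_map.2 ⟨i₀, hTmem, rfl⟩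
      have hnn : ∀ b ∈ L.map fun r => r.2 (x₀, y₀), (0:ℝ) ≤ b := by
        intro b hb
        obtain ⟨r, hr, rfl⟩ := List.mem_map.1 hb
        exact (hL r hr).2.2 _
      have := List.single_le_sum hnn _ hmm
      have hi₀pos : 0 < φ n i₀ x₀ := lt_of_le_of_ne ((hpart n).2.1 i₀ x₀).1 (Ne.symm hi₀)
      simpa using lt_of_lt_of_le hi₀pos this
    have hcont := contAt_comb μ hμc hμ1 ((x₀, y₀) : X × Y) L hL
      (fun _ => z₀) (fun _ => 0) {z₀} continuous_const (fun _ => le_refl 0)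
      isCompact_singleton
      (fun V _ hV => Eventually.of_forall fun w => hV rfl)
      (fun h => absurd h (lt_irrefl 0)) hpos
    have hGeq : (fun q : X × Y => comb μ ((fun _ => z₀) q) ((fun _ : X × Y => (0:ℝ)) q)
          (L.map fun r => (r.1 q, r.2 q)))
        = fun q : X × Y => comb μ z₀ 0 (Tl.map fun i => (f (p n i, q.2), φ n i q.1)) := by
      funext q
      rw [hLdef, List.map_map]
      rfl
    rw [hGeq] at hcont
    apply hcont.congr
    apply Filter.eventuallyEq_of_mem (prod_mem_nhds hU₀ univ_mem)
    rintro ⟨x, y⟩ ⟨hx, -⟩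
    exact (heq (x, y) hx).symm
  · -- pointwise convergence
    rintro ⟨x, y⟩
    rw [tendsto_nhds]
    intro Ws hWs hfW
    obtain ⟨K, hK⟩ := hupf x
    obtain ⟨V, hVopen, hVz, hVmono, hVstep, hV0⟩ :=
      comb_chain μ hμc hμd (f (x, y)) Ws (hWs.mem_nhds hfW)
    have hVW : ∀ m, V m ⊆ Ws := by
      intro m
      induction m with
      | zero => exact hV0
      | succ k ih => exact (hVmono k).trans ih
    have hUx : (fun x' => f (x', y)) ⁻¹' V K ∈ 𝓝 x :=
      ((hVopen K).preimage (hsep y)).mem_nhds (hVz K)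
    obtain ⟨n₀, hn₀⟩ := happrox x _ hUx
    rw [mem_atTop_sets]
    refine ⟨n₀, fun n hn => ?_⟩
    have hcard : (S n x).card ≤ K := by
      obtain ⟨s, hsc, hss⟩ := hK n
      refine le_trans (Finset.card_le_card ?_) hsc
      intro i hi
      rw [hSdef, Set.Finite.mem_toFinset] at hi
      exact hss i (subset_closure (Function.mem_support.2 hi))
    have hpts : ∀ i ∈ lst n x, f (p n i, y) ∈ V K := by
      intro i hi
      have hφ : φ n i x ≠ 0 := (hmem_lst n x i).1 hi
      exact hn₀ n hn i (subset_closure (Function.mem_support.2 hφ))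
    obtain ⟨i₀, hi₀⟩ := hexists n x
    have hlne : lst n x ≠ [] := by
      intro h
      have := (hmem_lst n x i₀).2 hi₀
      rw [h] at this
      simp at this
    obtain ⟨j, rest, hjl⟩ := List.exists_cons_of_ne_nil hlne
    have hjmem : j ∈ lst n x := by rw [hjl]; exact List.mem_cons_self
    have hgx : g n (x, y)
        = comb μ (f (p n j, y)) (φ n j x) (rest.map fun i => (f (p n i, y), φ n i x)) := by
      show comb μ z₀ 0 ((lst n x).map fun i => (f (p n i, y), φ n i x)) = _
      rw [hjl, List.map_cons]
      exact comb_cons_pos μ hμ1 _ _ _ ((hmem_lst n x j).1 hjmem) _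
    have hlen : (rest.map fun i => (f (p n i, y), φ n i x)).length ≤ K := by
      rw [List.length_map]
      have h1 : (lst n x).length = (S n x).card := Finset.length_sort _
      rw [hjl] at h1
      simp only [List.length_cons] at h1
      omega
    have hmm := comb_mem μ V hVmono hVstep (rest.map fun i => (f (p n i, y), φ n i x))
      (f (p n j, y)) (φ n j x) K (hpts j hjmem)
      (by
        rintro r hr
        obtain ⟨i, hi, rfl⟩ := List.mem_map.1 hr
        exact hpts i (by rw [hjl]; exact List.mem_cons_of_mem _ hi))
      hlen
    show g n (x, y) ∈ Ws
    rw [hgx]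
    exact hVW _ hmm
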